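/- Define f : [0,1] → [0,1] by f(x) = 2x for x ∈ [0, 1/2] and f(x) = −log 2 / log(x − 1/2) for x ∈ (1/2, 1], and set J_0 = (0, 1/2), J_1 = (1/2, 1). Let μ be any Borel probability measure on [0,1] such that for every n ≥ 1 and every word w ∈ {0,1}^n, μ({x ∈ [0,1] : f^i(x) ∈ J_{w_i} for all 0 ≤ i < n}) = 2^{−n}. Then ∫_{(1/2,1]} |log(x − 1/2)| dμ(x) = ∞; that is, μ is nonadapted with respect to 1/2. -/
import Mathlib


open Set Filter MeasureTheory Topology
open scoped ENNReal

/-- The interval map `f(x) = 2x` on `[0,1/2]`, `f(x) = −log 2 / log(x − 1/2)` on `(1/2,1]`. -/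
noncomputable def logBranchMap (x : ℝ) : ℝ :=
  if x ≤ 1 / 2 then 2 * x else -Real.log 2 / Real.log (x - 1 / 2)

/-- The open partition intervals `J_0 = (0,1/2)` and `J_1 = (1/2,1)`. -/
def branchInterval (i : ℕ) : Set ℝ :=
  if i = 0 then Ioo (0:ℝ) (1/2) else Ioo (1/2 : ℝ) 1

lemma logBranchMap_measurable : Measurable logBranchMap := by
  unfold logBranchMap
  exact Measurable.ite (measurableSet_le measurable_id measurable_const)
    (measurable_const.mul measurable_id)
    (measurable_const.div (Real.measurable_log.comp (measurable_id.sub measurable_const)))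

lemma branchInterval_measurable (i : ℕ) : MeasurableSet (branchInterval i) := by
  unfold branchInterval; split <;> exact measurableSet_Ioo

lemma cyl_measurable (n : ℕ) (w : ℕ → ℕ) :
    MeasurableSet {x : ℝ | ∀ i, i < n → logBranchMap^[i] x ∈ branchInterval (w i)} := by
  have : {x : ℝ | ∀ i, i < n → logBranchMap^[i] x ∈ branchInterval (w i)} =
      ⋂ i, ⋂ (_ : i < n), (logBranchMap^[i]) ⁻¹' (branchInterval (w i)) := by
    ext x; simp [Set.mem_iInter]
  rw [this]
  exact MeasurableSet.iInter fun i => MeasurableSet.iInter fun _ =>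
    (branchInterval_measurable (w i)).preimage (logBranchMap_measurable.iterate i)

lemma iter_doubling (x : ℝ) : ∀ m : ℕ,
    (∀ j, 1 ≤ j → j ≤ m → logBranchMap^[j] x ∈ Ioo (0:ℝ) (1/2)) →
    logBranchMap^[m+1] x = 2^m * logBranchMap x := by
  intro m
  induction m with
  | zero => intro _; simp
  | succ k ih =>
    intro h
    have h1 : logBranchMap^[k+1] x = 2^k * logBranchMap x :=
      ih (fun j hj1 hj2 => h j hj1 (by omega))
    have h2 : logBranchMap^[k+1] x ∈ Ioo (0:ℝ) (1/2) := h (k+1) (by omega) le_rfl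
    have h3 : logBranchMap^[k+1+1] x = logBranchMap (logBranchMap^[k+1] x) :=
      Function.iterate_succ_apply' _ _ _
    rw [h3, logBranchMap, if_pos h2.2.le, h1]; ring

lemma log_bound (n : ℕ) (x : ℝ)
    (hx : ∀ i, i < n+1 → logBranchMap^[i] x ∈ branchInterval (if i = 0 then 1 else 0)) :
    Real.log 2 * 2^n ≤ |Real.log (x - 1/2)| := by
  have hx0 : x ∈ Ioo (1/2:ℝ) 1 := by
    have := hx 0 (by omega); simpa [branchInterval] using this
  have ht0 : 0 < x - 1/2 := by linarith [hx0.1]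
  have ht1 : x - 1/2 < 1/2 := by linarith [hx0.2]
  have hlogneg : Real.log (x - 1/2) < 0 := Real.log_neg ht0 (by linarith)
  have habs : |Real.log (x - 1/2)| = -Real.log (x - 1/2) := abs_of_neg hlogneg
  have hlog2 : (0:ℝ) < Real.log 2 := Real.log_pos (by norm_num)
  have hbase : Real.log (x - 1/2) ≤ -Real.log 2 := by
    have h1 := Real.log_le_log ht0 ht1.le
    have h2 : Real.log (1/2:ℝ) = -Real.log 2 := by rw [one_div, Real.log_inv]
    linarith
  have hfx : logBranchMap x = Real.log 2 / (-Real.log (x - 1/2)) := by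
    rw [logBranchMap, if_neg (not_le.2 hx0.1), neg_div, div_neg]
  rcases Nat.eq_zero_or_pos n with hn | hn
  · subst hn; rw [habs]; simpa using (by linarith : Real.log 2 ≤ -Real.log (x - 1/2))
  · obtain ⟨m, rfl⟩ : ∃ m, n = m + 1 := ⟨n - 1, by omega⟩
    have hJ0 : ∀ j, 1 ≤ j → j ≤ m + 1 → logBranchMap^[j] x ∈ Ioo (0:ℝ) (1/2) := by
      intro j hj1 hj2
      have := hx j (by omega)
      have hj0 : j ≠ 0 := by omega
      simpa [branchInterval, hj0] using this
    have hiter : logBranchMap^[m+1] x = 2^m * logBranchMap x :=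
      iter_doubling x m (fun j hj1 hj2 => hJ0 j hj1 (by omega))
    have hmem : logBranchMap^[m+1] x ∈ Ioo (0:ℝ) (1/2) := hJ0 (m+1) (by omega) le_rfl
    have hL : (0:ℝ) < -Real.log (x - 1/2) := by linarith
    have hlt : 2^m * (Real.log 2 / (-Real.log (x - 1/2))) < 1/2 := by
      rw [← hfx, ← hiter]; exact hmem.2
    rw [mul_div_assoc'] at hlt
    rw [div_lt_iff₀ hL] at hlt
    have hp : (0:ℝ) < (2:ℝ)^m := by positivity
    rw [habs, pow_succ]
    nlinarith

/-- For the map `f(x) = 2x` on `[0,1/2]`, `f(x) = −log2/log(x−1/2)` on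
`(1/2,1]`, any Borel probability measure giving each dynamical `n`-cylinder measure `2^{−n}`
(e.g. the measure of maximal entropy) satisfies `∫_{(1/2,1]} |log(x−1/2)| dμ = ∞`;
that is, `μ` is nonadapted with respect to `1/2`. -/
theorem logBranchMap_mme_nonadapted
    (μ : Measure ℝ) [IsProbabilityMeasure μ]
    (hcyl : ∀ n : ℕ, 1 ≤ n → ∀ w : ℕ → ℕ, (∀ k, k < n → w k < 2) →
      μ {x : ℝ | ∀ i, i < n → logBranchMap^[i] x ∈ branchInterval (w i)} =
        (2 : ℝ≥0∞)⁻¹ ^ n) :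
    (∫⁻ x in Ioc (1/2 : ℝ) 1, ENNReal.ofReal |Real.log (x - 1/2)| ∂μ) = ⊤ := by
  set D : ℕ → Set ℝ := fun n =>
    {x : ℝ | ∀ i, i < n + 1 → logBranchMap^[i] x ∈ branchInterval (if i = 0 then 1 else 0)}
    with hD
  have hDmeas : ∀ n, MeasurableSet (D n) := fun n => cyl_measurable (n+1) _
  have hDμ : ∀ n, μ (D n) = (2:ℝ≥0∞)⁻¹ ^ (n+1) := fun n =>
    hcyl (n+1) (by omega) _ (fun k _ => by split <;> omega)
  have hDsub : ∀ n, D (n+1) ⊆ D n := fun n x hx i hi => hx i (by omega)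
  have hanti : Antitone D := antitone_nat_of_succ_le hDsub
  have hDIoc : ∀ n, D n ⊆ Ioc (1/2:ℝ) 1 := by
    intro n x hx
    have h0 := hx 0 (by omega)
    simp only [if_pos rfl, branchInterval, if_neg (one_ne_zero)] at h0
    exact ⟨h0.1, h0.2.le⟩
  set A : ℕ → Set ℝ := fun n => D n \ D (n+1) with hA
  have hAmeas : ∀ n, MeasurableSet (A n) := fun n => (hDmeas n).diff (hDmeas (n+1))
  have hAμ : ∀ n, μ (A n) = (2:ℝ≥0∞)⁻¹ ^ (n+2) := by
    intro n
    have hdiff : μ (A n) = μ (D n) - μ (D (n+1)) :=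
      measure_diff (hDsub n) (hDmeas (n+1)).nullMeasurableSet (measure_ne_top μ _)
    rw [hdiff, hDμ, hDμ]
    have h1 : (2:ℝ≥0∞)⁻¹ ^ (n+2) = (2:ℝ≥0∞)⁻¹ ^ (n+1) / 2 := by
      rw [pow_succ, div_eq_mul_inv]
    rw [h1]
    exact ENNReal.sub_half (ENNReal.pow_ne_top (by simp))
  have hdisjD : ∀ m n : ℕ, m < n → Disjoint (A m) (A n) := by
    intro m n hmn
    have h1 : A n ⊆ D (m+1) := (diff_subset).trans (hanti (by omega))
    exact (disjoint_sdiff_left.mono_right h1 : Disjoint (A m) (A n))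
  have hdisj : Pairwise (Function.onFun Disjoint A) := by
    intro m n hmn
    rcases lt_or_gt_of_ne hmn with h | h
    · exact hdisjD m n h
    · exact (hdisjD n m h).symm
  have hlog2 : (0:ℝ) < Real.log 2 := Real.log_pos (by norm_num)
  have htwo : (2:ℝ≥0∞) * 2⁻¹ = 1 := ENNReal.mul_inv_cancel (by norm_num) (by norm_num)
  have key : ∀ n : ℕ, ENNReal.ofReal (Real.log 2) * 4⁻¹ ≤
      ∫⁻ x in A n, ENNReal.ofReal |Real.log (x - 1/2)| ∂μ := by
    intro n
    have hb : ∀ x ∈ A n, ENNReal.ofReal (Real.log 2 * 2^n) ≤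
        ENNReal.ofReal |Real.log (x - 1/2)| := by
      intro x hx
      exact ENNReal.ofReal_le_ofReal (log_bound n x (fun i hi => hx.1 i hi))
    have hstep : ENNReal.ofReal (Real.log 2) * 4⁻¹ =
        ENNReal.ofReal (Real.log 2 * 2^n) * μ (A n) := by
      rw [hAμ n, ENNReal.ofReal_mul hlog2.le, mul_assoc]
      congr 1
      rw [ENNReal.ofReal_pow (by norm_num : (0:ℝ) ≤ 2), ENNReal.ofReal_ofNat,
        pow_add, ← mul_assoc, ← mul_pow, htwo, one_pow, one_mul]
      rw [← ENNReal.inv_pow]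
      norm_num
    rw [hstep]
    calc ENNReal.ofReal (Real.log 2 * 2^n) * μ (A n)
        = ∫⁻ _ in A n, ENNReal.ofReal (Real.log 2 * 2^n) ∂μ := (setLIntegral_const _ _).symm
      _ ≤ ∫⁻ x in A n, ENNReal.ofReal |Real.log (x - 1/2)| ∂μ :=
          setLIntegral_mono' (hAmeas n) hb
  have hc : ENNReal.ofReal (Real.log 2) * 4⁻¹ ≠ 0 := by
    refine mul_ne_zero ?_ ?_
    · exact (ENNReal.ofReal_pos.mpr hlog2).ne'
    · simp
  refine top_le_iff.mp ?_
  calc (⊤:ℝ≥0∞) = ∑' _ : ℕ, ENNReal.ofReal (Real.log 2) * 4⁻¹ :=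
        (ENNReal.tsum_const_eq_top_of_ne_zero hc).symm
    _ ≤ ∑' n : ℕ, ∫⁻ x in A n, ENNReal.ofReal |Real.log (x - 1/2)| ∂μ :=
        ENNReal.tsum_le_tsum key
    _ = ∫⁻ x in ⋃ n, A n, ENNReal.ofReal |Real.log (x - 1/2)| ∂μ :=
        (lintegral_iUnion hAmeas hdisj _).symm
    _ ≤ ∫⁻ x in Ioc (1/2 : ℝ) 1, ENNReal.ofReal |Real.log (x - 1/2)| ∂μ :=
        lintegral_mono_set (iUnion_subset fun n => (diff_subset).trans (hDIoc n))
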